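/- Let p > 2 be prime and n ≥ 1. Suppose that for every α ∈ F_{p^n} there exist a, b, c, d ∈ F_p, not all zero, with α^p·(cα + d) = aα + b. Then p^n ≤ (p(p+1))^2; in particular n ≤ 4. -/

import Mathlib

open Polynomial Finset

/-- If `p > 2` is prime, `n ≥ 1`, and every `α ∈ 𝔽_{pⁿ}` satisfies a relation
`α^p·(cα + d) = aα + b` with `a, b, c, d ∈ 𝔽_p` not all zero, then
`pⁿ ≤ (p(p+1))²`; in particular `n ≤ 4`. -/
theorem stmt16 (p : ℕ) [Fact p.Prime] (hp : 2 < p) (n : ℕ) (hn : 1 ≤ n)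
    (H : ∀ α : GaloisField p n, ∃ a b c d : ZMod p,
      ¬(a = 0 ∧ b = 0 ∧ c = 0 ∧ d = 0) ∧
      α ^ p * (algebraMap (ZMod p) (GaloisField p n) c * α
                + algebraMap (ZMod p) (GaloisField p n) d)
        = algebraMap (ZMod p) (GaloisField p n) a * α
            + algebraMap (ZMod p) (GaloisField p n) b) :
    p ^ n ≤ (p * (p + 1)) ^ 2 ∧ n ≤ 4 := by
  classical
  set F := GaloisField p n with hF
  letI : Fintype F := Fintype.ofFinite F
  set φ := algebraMap (ZMod p) F with hφdef
  have hφ : Function.Injective φ := (algebraMap (ZMod p) F).injective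
  set T := ((ZMod p × ZMod p × ZMod p) ⊕ (ZMod p × ZMod p)) with hT
  set poly : T → Polynomial F := fun t =>
    match t with
    | Sum.inl (a, b, d) => X ^ (p+1) + C (φ d) * X ^ p - C (φ a) * X - C (φ b)
    | Sum.inr (a, b) => X ^ p - C (φ a) * X - C (φ b) with hpoly
  have hdeg : ∀ t, (poly t).natDegree ≤ p + 1 := by
    rintro (⟨a,b,d⟩|⟨a,b⟩) <;> simp only [hpoly] <;> (compute_degree <;> omega)
  have hne : ∀ t, poly t ≠ 0 := by
    rintro (⟨a,b,d⟩|⟨a,b⟩) <;> intro h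
    · have := congrArg (fun q => Polynomial.coeff q (p+1)) h
      simp only [hpoly, coeff_add, coeff_sub, coeff_C_mul, coeff_X_pow, coeff_C,
        coeff_X, coeff_zero] at this
      simp [(show ¬(p+1 = p) by omega), (show ¬(1 = p+1) by omega), (show ¬(p+1 = 0) by omega), (show ¬(p = 0) by omega)] at this
    · have := congrArg (fun q => Polynomial.coeff q p) h
      simp only [hpoly, coeff_sub, coeff_C_mul, coeff_X_pow, coeff_C,
        coeff_X, coeff_zero] at this
      simp [(show ¬(1 = p) by omega), (show ¬(p = 0) by omega)] at this
  have key : ∀ α : F, ∃ t : T, (poly t).IsRoot α := by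
    intro α
    obtain ⟨a, b, c, d, hnz, heq⟩ := H α
    by_cases hc : c = 0
    · by_cases hd : d = 0
      · subst hc hd
        have ha : a ≠ 0 := by
          rintro rfl
          refine hnz ⟨rfl, ?_, rfl, rfl⟩
          apply hφ
          simpa using heq.symm
        have ha' : φ a ≠ 0 := fun h => ha (hφ (by simpa using h))
        have hα : α = φ (a⁻¹ * (-b)) := by
          rw [map_mul, map_inv₀, map_neg]
          rw [eq_comm, inv_mul_eq_iff_eq_mul₀ ha']
          have : (0 : F) = φ a * α + φ b := by simpa using heq
          linear_combination this
        refine ⟨Sum.inl (a⁻¹ * (-b), 0, 0), ?_⟩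
        simp only [hpoly, IsRoot, eval_sub, eval_add, eval_mul, eval_pow, eval_X, eval_C,
          map_zero, eval_zero, mul_zero, zero_mul, add_zero, sub_zero]
        have hfrob : α ^ p = α := by
          rw [hα, ← map_pow, ZMod.pow_card]
        rw [← hα]
        rw [pow_succ, hfrob]
        ring
      · have hd' : φ d ≠ 0 := fun h => hd (hφ (by simpa using h))
        subst hc
        refine ⟨Sum.inr (d⁻¹ * a, d⁻¹ * b), ?_⟩
        simp only [hpoly, IsRoot, eval_sub, eval_mul, eval_pow, eval_X, eval_C,
          map_mul, map_inv₀]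
        simp only [map_zero, zero_mul, zero_add] at heq
        linear_combination (φ d)⁻¹ * heq - α ^ p * mul_inv_cancel₀ hd'
    · have hc' : φ c ≠ 0 := fun h => hc (hφ (by simpa using h))
      refine ⟨Sum.inl (c⁻¹ * a, c⁻¹ * b, c⁻¹ * d), ?_⟩
      simp only [hpoly, IsRoot, eval_sub, eval_add, eval_mul, eval_pow, eval_X, eval_C,
        map_mul, map_inv₀]
      linear_combination (φ c)⁻¹ * heq - α ^ (p + 1) * mul_inv_cancel₀ hc'
  choose f hf using key
  have fiber : ∀ t ∈ (Finset.univ : Finset T), #{α ∈ (Finset.univ : Finset F) | f α = t} ≤ p + 1 := by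
    intro t _
    calc #{α ∈ (Finset.univ : Finset F) | f α = t}
        ≤ (poly t).roots.toFinset.card := by
          apply Finset.card_le_card
          intro α hα
          simp only [Finset.mem_filter] at hα
          rw [Multiset.mem_toFinset, mem_roots (hne t)]
          exact hα.2 ▸ hf α
      _ ≤ Multiset.card (poly t).roots := Multiset.toFinset_card_le _
      _ ≤ (poly t).natDegree := (poly t).card_roots'
      _ ≤ p + 1 := hdeg t
  have hmain : Fintype.card F ≤ (p + 1) * Fintype.card T :=
    Finset.card_le_mul_card_image_of_maps_to (fun a _ => Finset.mem_univ (f a)) (p+1) fiber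
  have hcardT : Fintype.card T = p^3 + p^2 := by
    simp [hT, ZMod.card]; ring
  have hcardF : Fintype.card F = p ^ n := by
    rw [← Nat.card_eq_fintype_card, GaloisField.card p n (by omega)]
  rw [hcardF, hcardT] at hmain
  have h1 : p ^ n ≤ (p * (p + 1)) ^ 2 := by
    calc p ^ n ≤ (p+1) * (p^3 + p^2) := hmain
      _ = (p * (p+1))^2 := by ring
  refine ⟨h1, ?_⟩
  by_contra hn4
  push_neg at hn4
  have h5 : p ^ 5 ≤ p ^ n := Nat.pow_le_pow_right (by omega) (by omega)
  have := h5.trans h1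
  nlinarith [this, hp]
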